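/- Let n ≥ 1 and let h : ℝⁿ → ℝⁿ be a diffeomorphism that is orientation-preserving (the determinant of its derivative is everywhere positive). Then h is smoothly isotopic to the identity: there is a smooth map H : ℝⁿ × [0,1] → ℝⁿ such that H(·,0) = h, H(·,1) = id, and H(·,t) is a diffeomorphism of ℝⁿ for every t ∈ [0,1]. -/

import Mathlib

set_option maxHeartbeats 1000000
set_option synthInstance.maxHeartbeats 400000


open Set Function Metric

noncomputable section

/-- Euclidean `n`-space. -/
abbrev E (n : ℕ) : Type := EuclideanSpace ℝ (Fin n)

/-- A diffeomorphism of `ℝⁿ`: a smooth bijection with smooth inverse. -/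
def IsDiffeo {n : ℕ} (g : E n → E n) : Prop :=
  ContDiff ℝ (⊤ : ℕ∞) g ∧ ∃ g' : E n → E n, ContDiff ℝ (⊤ : ℕ∞) g' ∧
    Function.LeftInverse g' g ∧ Function.RightInverse g' g

open MeasureTheory Matrix
open scoped ContDiff

namespace St18
set_option linter.unusedSectionVars false
set_option synthInstance.maxHeartbeats 1000000
set_option maxHeartbeats 1000000

lemma μ01_aux : True := trivial

def μ01 : Measure ℝ := volume.restrict (Icc (0:ℝ) 1)

instance : IsFiniteMeasure μ01 :=
  ⟨by rw [μ01, Measure.restrict_apply_univ]; exact measure_Icc_lt_top⟩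

variable {P F : Type} [NormedAddCommGroup P] [NormedSpace ℝ P] [FiniteDimensional ℝ P]
  [NormedAddCommGroup F] [NormedSpace ℝ F] [CompleteSpace F]

/-- partial derivative of `G` in the first variable -/
def pd (G : P × ℝ → F) (q : P × ℝ) : P →L[ℝ] F :=
  (fderiv ℝ G q).comp (ContinuousLinearMap.inl ℝ P ℝ)

lemma contDiff_pd {G : P × ℝ → F} (hG : ContDiff ℝ ∞ G) :
    ContDiff ℝ ∞ (pd G) :=
  (hG.fderiv_right (m := ∞) le_rfl).clm_comp contDiff_const

lemma hasFDerivAt_pd {G : P × ℝ → F} (hG : ContDiff ℝ ∞ G) (p : P) (u : ℝ) :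
    HasFDerivAt (fun p => G (p, u)) (pd G (p, u)) p :=
  ((hG.differentiable (by norm_num) (p,u)).hasFDerivAt).comp p
    (hasFDerivAt_prodMk_left p u)

lemma integrable_of_contDiff {f : ℝ → F} (hf : Continuous f) :
    Integrable f μ01 :=
  hf.continuousOn.integrableOn_compact isCompact_Icc

lemma key {G : P × ℝ → F} (hG : ContDiff ℝ ∞ G) (p₀ : P) :
    HasFDerivAt (fun p => ∫ u, G (p, u) ∂μ01) (∫ u, pd G (p₀, u) ∂μ01) p₀ := by
  obtain ⟨C, hC⟩ : ∃ C, ∀ q ∈ (closedBall p₀ 1) ×ˢ (Icc (0:ℝ) 1), ‖pd G q‖ ≤ C :=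
    ((isCompact_closedBall p₀ 1).prod isCompact_Icc).exists_bound_of_continuousOn
      ((contDiff_pd hG).continuous.continuousOn)
  refine hasFDerivAt_integral_of_dominated_of_fderiv_le (F' := fun p u => pd G (p, u))
    (bound := fun _ => C) (ball_mem_nhds p₀ one_pos) ?_ ?_ ?_ ?_ ?_ ?_
  · filter_upwards with p
    exact (hG.continuous.comp (Continuous.prodMk_right p)).aestronglyMeasurable
  · exact integrable_of_contDiff (hG.continuous.comp (Continuous.prodMk_right p₀))
  · exact ((contDiff_pd hG).continuous.comp (Continuous.prodMk_right p₀)).aestronglyMeasurable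
  · refine (ae_restrict_mem measurableSet_Icc).mono fun u hu p hp => ?_
    exact hC (p, u) ⟨ball_subset_closedBall hp, hu⟩
  · exact integrable_const C
  · filter_upwards with u p _
    exact hasFDerivAt_pd hG p u

lemma contDiff_nat_integral (m : ℕ) :
    ∀ {F : Type} [NormedAddCommGroup F] [NormedSpace ℝ F] [CompleteSpace F]
      {G : P × ℝ → F}, ContDiff ℝ ∞ G →
      ContDiff ℝ (m : ℕ∞) (fun p => ∫ u, G (p, u) ∂μ01) := by
  induction m with
  | zero =>
    intro F _ _ _ G hG
    refine contDiff_zero.mpr (continuous_iff_continuousAt.mpr fun p => ?_)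
    exact (key hG p).differentiableAt.continuousAt
  | succ m ih =>
    intro F _ _ _ G hG
    rw [show (((m + 1 : ℕ) : ℕ∞) : WithTop ℕ∞) = (((m : ℕ) : ℕ∞) : WithTop ℕ∞) + 1 by
      push_cast; rfl]
    rw [contDiff_succ_iff_fderiv]
    refine ⟨fun p => (key hG p).differentiableAt, by simp, ?_⟩
    have heq : fderiv ℝ (fun p => ∫ u, G (p, u) ∂μ01) = fun p => ∫ u, pd G (p, u) ∂μ01 :=
      funext fun p => (key hG p).fderiv
    rw [heq]
    exact ih (contDiff_pd hG)

lemma contDiff_integral {G : P × ℝ → F} (hG : ContDiff ℝ ∞ G) :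
    ContDiff ℝ ∞ (fun p => ∫ u, G (p, u) ∂μ01) := by
  rw [contDiff_infty]
  exact fun m => contDiff_nat_integral m hG

variable {n : ℕ}

abbrev Mat (n : ℕ) := Matrix (Fin n) (Fin n) ℝ

/-- A smooth segment of invertible matrices from `M` to `N`. -/
def Seg (γ : ℝ → Mat n) (M N : Mat n) : Prop :=
  (∀ i j, ContDiff ℝ ∞ fun t => γ t i j) ∧ γ 0 = M ∧ γ 1 = N ∧
    ∀ t ∈ Icc (0:ℝ) 1, IsUnit (γ t)

lemma Seg.mul {γ δ : ℝ → Mat n} {M N M' N'} (hγ : Seg γ M N) (hδ : Seg δ M' N') :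
    Seg (fun t => γ t * δ t) (M * M') (N * N') := by
  refine ⟨fun i j => ?_, by simp [hγ.2.1, hδ.2.1], by simp [hγ.2.2.1, hδ.2.2.1],
    fun t ht => (hγ.2.2.2 t ht).mul (hδ.2.2.2 t ht)⟩
  simp only [Matrix.mul_apply]
  exact ContDiff.sum fun k _ => (hγ.1 i k).mul (hδ.1 k j)

lemma Seg.unit_right {γ : ℝ → Mat n} {M N} (hγ : Seg γ M N) : IsUnit N :=
  hγ.2.2.1 ▸ hγ.2.2.2 1 (by norm_num)

lemma Seg.unit_left {γ : ℝ → Mat n} {M N} (hγ : Seg γ M N) : IsUnit M :=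
  hγ.2.1 ▸ hγ.2.2.2 0 (by norm_num)

lemma Seg.trans {γ δ : ℝ → Mat n} {M N Q} (hγ : Seg γ M N) (hδ : Seg δ N Q) :
    Seg (fun t => γ t * N⁻¹ * δ t) M Q := by
  have hN : IsUnit N.det := (Matrix.isUnit_iff_isUnit_det N).mp hγ.unit_right
  have hNinv : IsUnit (N⁻¹) := Matrix.isUnit_nonsing_inv_iff.mpr hγ.unit_right
  refine ⟨fun i j => ?_, ?_, ?_, fun t ht => ((hγ.2.2.2 t ht).mul hNinv).mul (hδ.2.2.2 t ht)⟩
  · simp only [Matrix.mul_apply]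
    exact ContDiff.sum fun k _ => (ContDiff.sum fun l _ =>
      (hγ.1 i l).mul contDiff_const).mul (hδ.1 k j)
  · show γ 0 * N⁻¹ * δ 0 = M
    rw [hγ.2.1, hδ.2.1, Matrix.mul_assoc, Matrix.nonsing_inv_mul N hN, Matrix.mul_one]
  · show γ 1 * N⁻¹ * δ 1 = Q
    rw [hγ.2.2.1, hδ.2.2.1, Matrix.mul_nonsing_inv N hN, Matrix.one_mul]

lemma Seg.refl {M : Mat n} (h : IsUnit M) : Seg (fun _ => M) M M :=
  ⟨fun _ _ => contDiff_const, rfl, rfl, fun _ _ => h⟩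

/-- Segment from a transvection to the identity. -/
lemma seg_transvection (t : TransvectionStruct (Fin n) ℝ) :
    Seg (fun s => Matrix.transvection t.i t.j ((1 - s) * t.c)) t.toMatrix 1 := by
  obtain ⟨i, j, hij, c⟩ := t
  refine ⟨fun i' j' => ?_, by simp, by simp [Matrix.transvection_zero], fun s _ => ?_⟩
  · simp only [Matrix.transvection, Matrix.add_apply, Matrix.single, Matrix.of_apply]
    by_cases hc : i = i' ∧ j = j' <;> simp [hc] <;> fun_prop
  · rw [Matrix.isUnit_iff_isUnit_det, Matrix.det_transvection_of_ne _ _ hij]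
    exact isUnit_one

/-- Segment from a product of transvections to the identity. -/
lemma seg_list (L : List (TransvectionStruct (Fin n) ℝ)) :
    ∃ γ, Seg γ (L.map TransvectionStruct.toMatrix).prod 1 := by
  induction L with
  | nil => exact ⟨_, by simpa using Seg.refl (isUnit_one (M := Mat n))⟩
  | cons t L ih =>
    obtain ⟨γ, hγ⟩ := ih
    refine ⟨_, by simpa using (seg_transvection t).mul hγ⟩

section Rotation

variable (a b : Fin n)

def Pm : Mat n := Matrix.single a a 1 + Matrix.single b b 1
def Jm : Mat n := Matrix.single a b 1 - Matrix.single b a 1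

def Rot (θ : ℝ) : Mat n := 1 + (Real.cos θ - 1) • Pm a b + Real.sin θ • Jm a b

variable {a b} (hab : a ≠ b)

include hab

lemma Pm_mul_Pm : Pm a b * Pm a b = Pm a b := by
  simp only [Pm, add_mul, mul_add, Matrix.single_mul_single_same]
  rw [Matrix.single_mul_single_of_ne (h := hab), Matrix.single_mul_single_of_ne (h := hab.symm)]
  simp

lemma Pm_mul_Jm : Pm a b * Jm a b = Jm a b := by
  simp only [Pm, Jm, add_mul, mul_sub, Matrix.single_mul_single_same]
  rw [Matrix.single_mul_single_of_ne (h := hab), Matrix.single_mul_single_of_ne (h := hab.symm)]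
  simp

lemma Jm_mul_Pm : Jm a b * Pm a b = Jm a b := by
  simp only [Pm, Jm, sub_mul, mul_add, Matrix.single_mul_single_same]
  rw [Matrix.single_mul_single_of_ne (h := hab), Matrix.single_mul_single_of_ne (h := hab.symm)]
  simp
  try abel

lemma Jm_mul_Jm : Jm a b * Jm a b = -(Pm a b) := by
  simp only [Pm, Jm, sub_mul, mul_sub, Matrix.single_mul_single_same]
  rw [Matrix.single_mul_single_of_ne (h := hab), Matrix.single_mul_single_of_ne (h := hab.symm)]
  simp only [mul_one, zero_sub, sub_zero, add_zero, zero_add, sub_neg_eq_add, neg_add_rev]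
  abel

lemma Rot_mul (θ φ : ℝ) : Rot a b θ * Rot a b φ = Rot a b (θ + φ) := by
  simp only [Rot, add_mul, mul_add, one_mul, mul_one, smul_mul_assoc, mul_smul_comm,
    smul_smul, Pm_mul_Pm hab, Pm_mul_Jm hab, Jm_mul_Pm hab, Jm_mul_Jm hab,
    Real.cos_add, Real.sin_add]
  module

lemma Rot_zero : Rot a b 0 = 1 := by simp [Rot]

lemma Rot_unit (θ : ℝ) : IsUnit (Rot a b θ) := by
  refine isUnit_iff_exists.mpr ⟨Rot a b (-θ), ?_, ?_⟩
  · rw [Rot_mul hab, add_neg_cancel, Rot_zero hab]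
  · rw [Rot_mul hab, neg_add_cancel, Rot_zero hab]

end Rotation

/-- The diagonal sign matrix with `-1` on `s`. -/
def signM (s : Finset (Fin n)) : Mat n :=
  Matrix.diagonal (fun i => if i ∈ s then (-1 : ℝ) else 1)

lemma Rot_pi {a b : Fin n} (hab : a ≠ b) : Rot a b Real.pi = signM {a, b} := by
  ext i j
  simp only [Rot, Real.cos_pi, Real.sin_pi, signM, Pm, zero_smul, add_zero,
    Matrix.add_apply, Matrix.smul_apply, Matrix.one_apply, Matrix.diagonal_apply,
    Matrix.add_apply, smul_eq_mul, Finset.mem_insert, Finset.mem_singleton,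
    Matrix.single, Matrix.of_apply]
  by_cases hia : i = a <;> by_cases hib : i = b <;> by_cases hij : i = j <;>
    simp_all <;> ring_nf <;> simp_all [eq_comm]

lemma seg_pair {a b : Fin n} (hab : a ≠ b) :
    Seg (fun t => Rot a b (Real.pi * (1 - t))) (signM {a, b}) 1 := by
  have hc : ContDiff ℝ ∞ fun t : ℝ => Real.cos (Real.pi * (1 - t)) :=
    Real.contDiff_cos.comp (contDiff_const.mul (contDiff_const.sub contDiff_id))
  have hs : ContDiff ℝ ∞ fun t : ℝ => Real.sin (Real.pi * (1 - t)) :=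
    Real.contDiff_sin.comp (contDiff_const.mul (contDiff_const.sub contDiff_id))
  refine ⟨fun i j => ?_, by norm_num [Rot_pi hab], by norm_num [Rot_zero hab],
    fun t _ => Rot_unit hab _⟩
  · simp only [Rot, Matrix.add_apply, Matrix.smul_apply, smul_eq_mul]
    exact (contDiff_const.add ((hc.sub contDiff_const).mul contDiff_const)).add
      (hs.mul contDiff_const)

lemma signM_empty : signM (∅ : Finset (Fin n)) = 1 := by
  simp [signM]

lemma signM_unit (s : Finset (Fin n)) : IsUnit (signM s) := by
  rw [Matrix.isUnit_iff_isUnit_det, signM, Matrix.det_diagonal]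
  refine isUnit_iff_ne_zero.mpr (Finset.prod_ne_zero_iff.mpr fun i _ => ?_)
  split_ifs <;> norm_num

lemma signM_decomp {s : Finset (Fin n)} {a b : Fin n} (ha : a ∈ s) (hb : b ∈ s)
    (hab : a ≠ b) : signM s = signM ((s.erase a).erase b) * signM {a, b} := by
  have hfun : (fun i => if i ∈ s then (-1:ℝ) else 1) =
      fun i => (if i ∈ (s.erase a).erase b then (-1:ℝ) else 1) *
        (if i ∈ ({a, b} : Finset (Fin n)) then (-1:ℝ) else 1) := by
    funext i
    by_cases hia : i = a
    · subst hia
      rw [if_pos ha, if_neg (by simp [Finset.mem_erase]), if_pos (by simp)]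
      norm_num
    · by_cases hib : i = b
      · subst hib
        rw [if_pos hb, if_neg (by simp [Finset.mem_erase]), if_pos (by simp)]
        norm_num
      · have hnab : ¬(i ∈ ({a, b} : Finset (Fin n))) := by simp [hia, hib]
        rw [if_neg hnab, mul_one]
        simp [Finset.mem_erase, hia, hib]
  rw [signM, signM, signM, Matrix.diagonal_mul_diagonal, hfun]

lemma seg_sign (m : ℕ) : ∀ s : Finset (Fin n), s.card = m → Even m →
    ∃ γ, Seg γ (signM s) 1 := by
  induction m using Nat.strong_induction_on with
  | _ m ih =>
    intro s hcard heven
    match m, hcard, heven with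
    | 0, hcard, _ =>
      have hs : s = ∅ := Finset.card_eq_zero.mp hcard
      exact ⟨fun _ => (1 : Mat n), by rw [hs, signM_empty]; exact Seg.refl isUnit_one⟩
    | 1, hcard, heven => exact absurd heven (by norm_num)
    | (m+2), hcard, heven =>
      obtain ⟨a, ha⟩ := Finset.card_pos.mp (by omega : 0 < s.card)
      obtain ⟨b, hb'⟩ : ∃ b, b ∈ s.erase a := Finset.card_pos.mp
        (by rw [Finset.card_erase_of_mem ha, hcard]; omega)
      obtain ⟨hba, hb⟩ := Finset.mem_erase.mp hb'
      have hab : a ≠ b := hba.symm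
      have hcard' : ((s.erase a).erase b).card = m := by
        rw [Finset.card_erase_of_mem hb', Finset.card_erase_of_mem ha, hcard]
        omega
      obtain ⟨γ, hγ⟩ := ih m (by omega) _ hcard' (by
        rcases heven with ⟨k, hk⟩
        exact ⟨k - 1, by omega⟩)
      have h2 := hγ.mul (seg_pair hab)
      rw [mul_one] at h2
      rw [signM_decomp ha hb hab]
      exact ⟨_, h2⟩

lemma seg_diag (d : Fin n → ℝ) (hd : ∀ i, d i ≠ 0) :
    Seg (fun t => Matrix.diagonal (fun i => (1 - t) * d i + t * (d i / |d i|)))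
      (Matrix.diagonal d) (signM (Finset.univ.filter fun i => d i < 0)) := by
  have hsign : ∀ i, d i / |d i| = if d i < 0 then (-1:ℝ) else 1 := by
    intro i
    rcases lt_or_gt_of_ne (hd i) with hneg | hpos
    · rw [if_pos hneg, abs_of_neg hneg, div_neg, div_self (hd i)]
    · rw [if_neg (not_lt.mpr hpos.le), abs_of_pos hpos, div_self (hd i)]
  have hpos' : ∀ (t : ℝ), t ∈ Icc (0:ℝ) 1 → ∀ i, (1 - t) * d i + t * (d i / |d i|) ≠ 0 := by
    intro t ht i
    rw [hsign i]
    rcases lt_or_gt_of_ne (hd i) with hneg | hpos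
    · rw [if_pos hneg]
      have h1 : (1 - t) * d i ≤ 0 := mul_nonpos_of_nonneg_of_nonpos (by linarith [ht.2]) hneg.le
      rcases eq_or_lt_of_le ht.1 with h0 | h0
      · nlinarith [ht.2]
      · nlinarith
    · rw [if_neg (not_lt.mpr hpos.le)]
      rcases eq_or_lt_of_le ht.1 with h0 | h0
      · nlinarith [ht.2]
      · nlinarith [ht.2]
  refine ⟨fun i j => ?_, by simp, ?_, fun t ht => ?_⟩
  · simp only [Matrix.diagonal_apply]
    by_cases hij : i = j
    · simp only [if_pos hij]
      fun_prop
    · simp only [if_neg hij]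
      exact contDiff_const
  · show Matrix.diagonal (fun i => (1 - (1:ℝ)) * d i + 1 * (d i / |d i|)) = _
    rw [signM]
    have hfun2 : (fun i => (1 - (1:ℝ)) * d i + 1 * (d i / |d i|)) =
        fun i => if i ∈ Finset.univ.filter (fun i => d i < 0) then (-1:ℝ) else 1 := by
      funext i
      simp only [Finset.mem_filter, Finset.mem_univ, true_and]
      rw [← hsign i]
      ring
    rw [hfun2]
  · rw [Matrix.isUnit_iff_isUnit_det, Matrix.det_diagonal]
    exact isUnit_iff_ne_zero.mpr (Finset.prod_ne_zero_iff.mpr fun i _ => by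
      have := hpos' t ht i
      rw [hsign i] at this ⊢
      exact this)

lemma even_card_neg (d : Fin n → ℝ) (hd : ∀ i, d i ≠ 0) (hdet : 0 < ∏ i, d i) :
    Even (Finset.univ.filter fun i => d i < 0).card := by
  have habs : (0:ℝ) < ∏ i, |d i| := Finset.prod_pos fun i _ => abs_pos.mpr (hd i)
  have hprod : ∏ i, (d i / |d i|) = (∏ i, d i) / ∏ i, |d i| := by
    rw [Finset.prod_div_distrib]
  have hpos : (0:ℝ) < ∏ i, (d i / |d i|) := by rw [hprod]; positivity
  have hsplit : ∏ i, (d i / |d i|) =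
      (-1 : ℝ) ^ (Finset.univ.filter fun i => d i < 0).card := by
    rw [← Finset.prod_filter_mul_prod_filter_not Finset.univ (fun i => d i < 0)]
    have h1 : ∀ i ∈ Finset.univ.filter (fun i => d i < 0), d i / |d i| = -1 := by
      intro i hi
      have hi' : d i < 0 := (Finset.mem_filter.mp hi).2
      rw [abs_of_neg hi', div_neg, div_self (hd i)]
    have h2 : ∀ i ∈ Finset.univ.filter (fun i => ¬ d i < 0), d i / |d i| = 1 := by
      intro i hi
      have hi' : 0 < d i := (hd i).lt_or_gt.resolve_left (Finset.mem_filter.mp hi).2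
      rw [abs_of_pos hi', div_self (hd i)]
    rw [Finset.prod_congr rfl h1, Finset.prod_congr rfl h2, Finset.prod_const,
      Finset.prod_const, one_pow, mul_one]
  by_contra hodd
  rw [Nat.not_even_iff_odd] at hodd
  rw [hsplit, hodd.neg_one_pow] at hpos
  linarith

/-- Main lemma: any matrix with positive determinant is connected to `1` by a
smooth segment of invertible matrices. -/
lemma seg_of_pos_det (M : Mat n) (hdet : 0 < M.det) : ∃ γ, Seg γ M 1 := by
  obtain ⟨L, L', D, hM⟩ := Matrix.Pivot.exists_list_transvec_mul_diagonal_mul_list_transvec M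
  have hDdet : 0 < ∏ i, D i := by
    have : M.det = ∏ i, D i := by
      rw [hM, Matrix.det_mul, Matrix.det_mul, Matrix.TransvectionStruct.det_toMatrix_prod,
        Matrix.TransvectionStruct.det_toMatrix_prod, Matrix.det_diagonal]
      ring
    linarith [this ▸ hdet]
  have hd : ∀ i, D i ≠ 0 := fun i =>
    Finset.prod_ne_zero_iff.mp (ne_of_gt hDdet) i (Finset.mem_univ i)
  obtain ⟨γL, hγL⟩ := seg_list L
  obtain ⟨γL', hγL'⟩ := seg_list L'
  obtain ⟨γS, hγS⟩ := seg_sign _ _ rfl (even_card_neg D hd hDdet)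
  have hD : Seg _ (Matrix.diagonal D) 1 := (seg_diag D hd).trans hγS
  have := (hγL.mul hD).mul hγL'
  rw [mul_one, mul_one] at this
  rw [hM]
  exact ⟨_, this⟩


section Assembly

variable {n : ℕ}

local notation "bE" => PiLp.basisFun 2 ℝ (Fin n)

lemma toLin_apply_eq (M : Mat n) (v : E n) :
    Matrix.toLin bE bE M v = ∑ i, (∑ j, M i j * v j) • (PiLp.basisFun 2 ℝ (Fin n)) i := by
  rw [Matrix.toLin_apply]
  refine Finset.sum_congr rfl fun i _ => rfl

lemma contDiff_toLin_gamma {γ : ℝ → Mat n} (hγ : ∀ i j, ContDiff ℝ ∞ fun t => γ t i j) :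
    ContDiff ℝ ∞ (fun q : E n × ℝ => Matrix.toLin bE bE (γ q.2) q.1) := by
  have heq : (fun q : E n × ℝ => Matrix.toLin bE bE (γ q.2) q.1)
      = fun q => ∑ i, (∑ j, γ q.2 i j * EuclideanSpace.proj j q.1) • (PiLp.basisFun 2 ℝ (Fin n)) i := by
    funext q; rw [toLin_apply_eq]; rfl
  rw [heq]
  exact ContDiff.sum fun i _ => ContDiff.smul
    (ContDiff.sum fun j _ => ContDiff.mul ((hγ i j).comp contDiff_snd)
      (((EuclideanSpace.proj j : E n →L[ℝ] ℝ)).contDiff.comp contDiff_fst)) contDiff_const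

lemma contDiff_toLin_app {D : Type} [NormedAddCommGroup D] [NormedSpace ℝ D]
    (γ : ℝ → Mat n) (hγ : ∀ i j, ContDiff ℝ ∞ fun t => γ t i j)
    {f : D → E n} {τ : D → ℝ} (hf : ContDiff ℝ ∞ f) (hτ : ContDiff ℝ ∞ τ) :
    ContDiff ℝ ∞ (fun p : D => Matrix.toLin bE bE (γ (τ p)) (f p)) := by
  have heq : (fun p : D => Matrix.toLin bE bE (γ (τ p)) (f p))
      = fun p => ∑ i, (∑ j, γ (τ p) i j * EuclideanSpace.proj j (f p)) •
          (PiLp.basisFun 2 ℝ (Fin n)) i := by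
    funext p; rw [toLin_apply_eq]; rfl
  rw [heq]
  exact ContDiff.sum fun i _ => ContDiff.smul
    (ContDiff.sum fun j _ => ContDiff.mul ((hγ i j).comp hτ)
      (((EuclideanSpace.proj j : E n →L[ℝ] ℝ)).contDiff.comp hf)) contDiff_const

lemma contDiff_toLin_const (M : Mat n) :
    ContDiff ℝ ∞ (⇑(Matrix.toLin bE bE M)) := by
  rw [← LinearMap.coe_toContinuousLinearMap' (Matrix.toLin bE bE M)]
  exact (LinearMap.toContinuousLinearMap (Matrix.toLin bE bE M)).contDiff

lemma toLin_cancel_left {M : Mat n} (hM : IsUnit M.det) (v : E n) :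
    Matrix.toLin bE bE M⁻¹ (Matrix.toLin bE bE M v) = v := by
  rw [← Matrix.toLin_mul_apply, Matrix.nonsing_inv_mul M hM, Matrix.toLin_one, LinearMap.id_apply]

lemma toLin_cancel_right {M : Mat n} (hM : IsUnit M.det) (v : E n) :
    Matrix.toLin bE bE M (Matrix.toLin bE bE M⁻¹ v) = v := by
  rw [← Matrix.toLin_mul_apply, Matrix.mul_nonsing_inv M hM, Matrix.toLin_one, LinearMap.id_apply]

end Assembly

end St18

open St18

/-- Every orientation-preserving diffeomorphism of `ℝⁿ` (the
determinant of its derivative is everywhere positive) is smoothly isotopic to the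
identity. -/
theorem statement18 (n : ℕ) (hn : 1 ≤ n) (h : E n → E n) (hdiff : IsDiffeo h)
    (hor : ∀ x, 0 < (fderiv ℝ h x).det) :
    ∃ H : E n × ℝ → E n,
      ContDiffOn ℝ (⊤ : ℕ∞) H ((univ : Set (E n)) ×ˢ Icc (0:ℝ) 1) ∧
      (∀ x, H (x, 0) = h x) ∧ (∀ x, H (x, 1) = x) ∧
      ∀ t ∈ Icc (0:ℝ) 1, IsDiffeo (fun x => H (x, t)) := by
  classical
  obtain ⟨hh', g, hg', hgh, hhg⟩ := hdiff
  have hh : ContDiff ℝ ∞ h := hh'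
  have hg : ContDiff ℝ ∞ g := hg'
  set c : E n := h 0 with hc
  set k : E n → E n := fun x => h x - c with hkdef
  have hk : ContDiff ℝ ∞ k := hh.sub contDiff_const
  have hk0 : k 0 = 0 := sub_self _
  have hfk : ∀ x, fderiv ℝ k x = fderiv ℝ h x := fun x => fderiv_sub_const c
  set A : E n →L[ℝ] E n := fderiv ℝ h 0 with hA
  set G : (E n × ℝ) × ℝ → E n := fun q => (fderiv ℝ k (q.2 • q.1.2 • q.1.1)) q.1.1 with hGdef
  have hGsmooth : ContDiff ℝ ∞ G := by
    refine ContDiff.clm_apply ?_ contDiff_fst.fst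
    exact (hk.fderiv_right le_rfl).comp
      (contDiff_snd.smul (contDiff_fst.snd.smul contDiff_fst.fst))
  set K : E n × ℝ → E n := fun p => ∫ u, G (p, u) ∂μ01 with hKdef
  have hK : ContDiff ℝ ∞ K := contDiff_integral hGsmooth
  have keyid : ∀ (x : E n) (s : ℝ), s • K (x, s) = k (s • x) := by
    intro x s
    set w : E n := s • x with hw
    have hΦ : ∀ u ∈ uIcc (0:ℝ) 1,
        HasDerivAt (fun u : ℝ => k (u • w)) ((fderiv ℝ k (u • w)) w) u := by
      intro u _
      have h1 : HasDerivAt (fun u : ℝ => u • w) w u := by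
        simpa using (hasDerivAt_id u).smul_const w
      exact ((hk.differentiable (by norm_num) (u • w)).hasFDerivAt).comp_hasDerivAt u h1
    have hcont : ContDiff ℝ ∞ fun u : ℝ => (fderiv ℝ k (u • w)) w :=
      ContDiff.clm_apply ((hk.fderiv_right le_rfl).comp (contDiff_id.smul contDiff_const))
        contDiff_const
    have hFTC := intervalIntegral.integral_eq_sub_of_hasDerivAt hΦ
      (hcont.continuous.intervalIntegrable 0 1)
    have hμ : ∫ u, (fderiv ℝ k (u • w)) w ∂μ01 = ∫ u in (0:ℝ)..1, (fderiv ℝ k (u • w)) w := by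
      rw [intervalIntegral.integral_of_le zero_le_one, show μ01 = volume.restrict (Icc (0:ℝ) 1)
        from rfl, integral_Icc_eq_integral_Ioc]
    have hsmul : s • K (x, s) = ∫ u, (fderiv ℝ k (u • w)) w ∂μ01 := by
      rw [hKdef, ← integral_smul]
      refine integral_congr_ae (Filter.Eventually.of_forall fun u => ?_)
      show s • (fderiv ℝ k (u • s • x)) x = (fderiv ℝ k (u • w)) w
      rw [hw, ← ContinuousLinearMap.map_smul]
    rw [hsmul, hμ, hFTC, one_smul, zero_smul, hk0, sub_zero]
  have K1 : ∀ x : E n, K (x, 1) = k x := by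
    intro x
    have := keyid x 1
    simpa using this
  have K0 : ∀ x : E n, K (x, 0) = A x := by
    intro x
    have h1 : K (x, 0) = ∫ _u, (fderiv ℝ k 0) x ∂μ01 := by
      refine integral_congr_ae (Filter.Eventually.of_forall fun u => ?_)
      show (fderiv ℝ k (u • (0:ℝ) • x)) x = (fderiv ℝ k 0) x
      rw [zero_smul, smul_zero]
    have h2 : μ01 Set.univ = 1 := by
      rw [show μ01 = volume.restrict (Icc (0:ℝ) 1) from rfl, Measure.restrict_apply_univ,
        Real.volume_Icc]
      norm_num
    rw [h1, integral_const, measureReal_def, h2, hfk 0]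
    simp [hA]
  have hdiffh : ∀ x, HasFDerivAt h (fderiv ℝ h x) x :=
    fun x => (hh.differentiable (by norm_num) x).hasFDerivAt
  have hdiffg : ∀ y, HasFDerivAt g (fderiv ℝ g y) y :=
    fun y => (hg.differentiable (by norm_num) y).hasFDerivAt
  set B : E n →L[ℝ] E n := fderiv ℝ g c with hB
  have hgc : g c = 0 := hgh 0
  have hBA : ∀ x, B (A x) = x := by
    intro x
    have hcomp : HasFDerivAt (g ∘ h) (B.comp A) 0 := (hdiffg (h 0)).comp 0 (hdiffh 0)
    rw [show g ∘ h = id from funext hgh] at hcomp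
    have huniq : B.comp A = ContinuousLinearMap.id ℝ (E n) :=
      hcomp.unique (hasFDerivAt_id 0)
    calc B (A x) = (B.comp A) x := rfl
    _ = x := by rw [huniq]; rfl
  have hAB : ∀ y, A (B y) = y := by
    intro y
    have hcomp : HasFDerivAt (h ∘ g) ((fderiv ℝ h (g c)).comp B) c :=
      (hdiffh (g c)).comp c (hdiffg c)
    rw [show h ∘ g = id from funext hhg] at hcomp
    rw [hgc] at hcomp
    have huniq : A.comp B = ContinuousLinearMap.id ℝ (E n) :=
      hcomp.unique (hasFDerivAt_id c)
    calc A (B y) = (A.comp B) y := rfl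
    _ = y := by rw [huniq]; rfl
  set M : Mat n := LinearMap.toMatrix (PiLp.basisFun 2 ℝ (Fin n)) (PiLp.basisFun 2 ℝ (Fin n))
    (A : E n →ₗ[ℝ] E n) with hM
  have hdetM : 0 < M.det := by
    rw [hM, LinearMap.det_toMatrix]
    exact hor 0
  obtain ⟨γ, hγ⟩ := seg_of_pos_det M hdetM
  have hΓ0 : Matrix.toLin (PiLp.basisFun 2 ℝ (Fin n)) (PiLp.basisFun 2 ℝ (Fin n)) (γ 0)
      = (A : E n →ₗ[ℝ] E n) := by
    rw [hγ.2.1, hM, Matrix.toLin_toMatrix]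
  have hΓ1 : Matrix.toLin (PiLp.basisFun 2 ℝ (Fin n)) (PiLp.basisFun 2 ℝ (Fin n)) (γ 1)
      = LinearMap.id := by
    rw [hγ.2.2.1, Matrix.toLin_one]
  have hcomp : ContDiff ℝ ∞ (fun p : E n × ℝ =>
      Matrix.toLin (PiLp.basisFun 2 ℝ (Fin n)) (PiLp.basisFun 2 ℝ (Fin n)) (γ p.2)
        (B (K (p.1, 1 - p.2)))) :=
    contDiff_toLin_app γ hγ.1
      (B.contDiff.comp (hK.comp (contDiff_fst.prodMk (contDiff_const.sub contDiff_snd))))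
      contDiff_snd
  set H : E n × ℝ → E n := fun p =>
    Matrix.toLin (PiLp.basisFun 2 ℝ (Fin n)) (PiLp.basisFun 2 ℝ (Fin n)) (γ p.2)
      (B (K (p.1, 1 - p.2))) + (1 - p.2) • c with hHdef
  have hHsmooth : ContDiff ℝ ∞ H :=
    hcomp.add ((contDiff_const.sub contDiff_snd).smul contDiff_const)
  have hH0 : ∀ x, H (x, 0) = h x := by
    intro x
    show Matrix.toLin _ _ (γ 0) (B (K (x, 1 - 0))) + (1 - 0) • c = h x
    rw [sub_zero, K1, hΓ0, one_smul]
    show A (B (k x)) + c = h x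
    rw [hAB, hkdef]
    exact sub_add_cancel (h x) c
  have hH1 : ∀ x, H (x, 1) = x := by
    intro x
    show Matrix.toLin _ _ (γ 1) (B (K (x, 1 - 1))) + (1 - 1) • c = x
    rw [sub_self, K0, hΓ1, hBA, zero_smul, add_zero, LinearMap.id_apply]
  refine ⟨H, hHsmooth.contDiffOn, hH0, hH1, ?_⟩
  intro t ht
  by_cases ht1 : t = 1
  · subst ht1
    have hid : (fun x => H (x, 1)) = (id : E n → E n) := funext fun x => hH1 x
    rw [hid]
    exact ⟨contDiff_id, id, contDiff_id, fun x => rfl, fun x => rfl⟩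
  · have hslice : ContDiff ℝ ∞ (fun x => H (x, t)) :=
      hHsmooth.comp (contDiff_id.prodMk contDiff_const)
    set s : ℝ := 1 - t with hs
    have hsne : s ≠ 0 := sub_ne_zero.mpr (fun hcon => ht1 hcon.symm)
    have hKs : ∀ x : E n, K (x, s) = s⁻¹ • k (s • x) := by
      intro x
      rw [← keyid x s, inv_smul_smul₀ hsne]
    have hudet : IsUnit (γ t).det :=
      (Matrix.isUnit_iff_isUnit_det _).mp (hγ.2.2.2 t ht)
    set Γt := Matrix.toLin (PiLp.basisFun 2 ℝ (Fin n)) (PiLp.basisFun 2 ℝ (Fin n)) (γ t)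
      with hΓt
    set Γinv := Matrix.toLin (PiLp.basisFun 2 ℝ (Fin n)) (PiLp.basisFun 2 ℝ (Fin n)) ((γ t)⁻¹)
      with hΓinv
    set W : E n → E n := fun y => s⁻¹ • g (s • A (Γinv (y - s • c)) + c) with hW
    have hWsmooth : ContDiff ℝ ∞ W := by
      rw [hW]
      refine ContDiff.const_smul _ ?_
      refine hg.comp (ContDiff.add ?_ contDiff_const)
      refine ContDiff.const_smul _ ?_
      refine A.contDiff.comp ?_
      exact (contDiff_toLin_const ((γ t)⁻¹)).comp (contDiff_id.sub contDiff_const)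
    have hHst : ∀ x, H (x, t) = Γt (B (K (x, s))) + s • c := fun x => rfl
    refine ⟨hslice, W, hWsmooth, ?_, ?_⟩
    · intro x
      show W (H (x, t)) = x
      rw [hHst, hW]
      show s⁻¹ • g (s • A (Γinv (Γt (B (K (x, s))) + s • c - s • c)) + c) = x
      rw [add_sub_cancel_right]
      rw [show Γinv (Γt (B (K (x, s)))) = B (K (x, s)) from toLin_cancel_left hudet _]
      rw [hAB, hKs, smul_inv_smul₀ hsne]
      rw [show k (s • x) + c = h (s • x) from sub_add_cancel (h (s • x)) c]
      rw [hgh (s • x), inv_smul_smul₀ hsne]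
    · intro y
      show H (W y, t) = y
      rw [hHst, hW]
      have hsW : s • (s⁻¹ • g (s • A (Γinv (y - s • c)) + c))
          = g (s • A (Γinv (y - s • c)) + c) := smul_inv_smul₀ hsne _
      rw [hKs, hsW]
      rw [show k (g (s • A (Γinv (y - s • c)) + c)) = s • A (Γinv (y - s • c)) by
        rw [hkdef]; show h (g _) - c = _; rw [hhg]; exact add_sub_cancel_right _ c]
      rw [inv_smul_smul₀ hsne, hBA]
      rw [show Γt (Γinv (y - s • c)) = y - s • c from toLin_cancel_right hudet _]
      exact sub_add_cancel y (s • c)
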